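/- arXiv:2003.06301 — 4 statements merged into one kernel-verified Lean document; each statement's English description precedes it below -/
import Mathlib

section
/- Let r : ℂⁿ → ℂⁿ be a change of variables with invertible Jacobian (generically), k a positive integer, and for smooth f let ∂^≤k f denote the column vector of all partial derivatives of f of orders 0 through k (with mixed partials counted once, ordered by degree then lexicographically). Then there is a matrix M(z), whose entries are polynomials in the partial derivatives of the rᵢ, such that for every smooth y, ∂^≤k(y ∘ r)(z) = M(z) · (∂^≤k y)(r(z)), and M(z) is invertible (its inverse N has entries that are rational functions of the partial derivatives of r). -/
/-- The partial derivative of `f` with respect to the `i`-th variable. -/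
noncomputable def pd {n : ℕ} (i : Fin n) (f : (Fin n → ℂ) → ℂ) : (Fin n → ℂ) → ℂ :=
  fun z => fderiv ℂ f z (Pi.single i 1)

/-- The iterated partial derivative `∂^v f` for a multi-index `v`. -/
noncomputable def mpd {n : ℕ} (v : Fin n → ℕ) (f : (Fin n → ℂ) → ℂ) : (Fin n → ℂ) → ℂ :=
  (List.finRange n).foldr (fun i g => (pd i)^[v i] g) f

/-- The index set of the generalized gradient up to order `k`: multi-indices of total
degree at most `k` (mixed partials counted once). -/
def MIdx (n k : ℕ) : Type := { v : Fin n → Fin (k + 1) // ∑ i, (v i : ℕ) ≤ k }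

instance (n k : ℕ) : Fintype (MIdx n k) := Subtype.fintype _
instance (n k : ℕ) : DecidableEq (MIdx n k) := Subtype.instDecidableEq

open scoped Topology


namespace Aux
variable {n : ℕ}

abbrev SmoothAt (f : (Fin n → ℂ) → ℂ) (z : Fin n → ℂ) : Prop := ContDiffAt ℂ ⊤ f z

noncomputable def mpdList (l : List (Fin n)) (f : (Fin n → ℂ) → ℂ) : (Fin n → ℂ) → ℂ :=
  l.foldr (fun i g => pd i g) f

@[simp] lemma mpdList_nil (f : (Fin n → ℂ) → ℂ) : mpdList [] f = f := rfl
@[simp] lemma mpdList_cons (i : Fin n) (l : List (Fin n)) (f : (Fin n → ℂ) → ℂ) :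
    mpdList (i :: l) f = pd i (mpdList l f) := rfl

lemma mpdList_append (l₁ l₂ : List (Fin n)) (f : (Fin n → ℂ) → ℂ) :
    mpdList (l₁ ++ l₂) f = mpdList l₁ (mpdList l₂ f) := by
  simp [mpdList, List.foldr_append]

lemma mpdList_replicate (m : ℕ) (i : Fin n) (f : (Fin n → ℂ) → ℂ) :
    mpdList (List.replicate m i) f = (pd i)^[m] f := by
  induction m with
  | zero => rfl
  | succ m ih => rw [List.replicate_succ, mpdList_cons, ih, Function.iterate_succ_apply']

def toListI (v : Fin n → ℕ) : List (Fin n) :=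
  (List.finRange n).flatMap fun i => List.replicate (v i) i

lemma mpd_eq_mpdList (v : Fin n → ℕ) (f : (Fin n → ℂ) → ℂ) :
    mpd v f = mpdList (toListI v) f := by
  rw [mpd, toListI]
  induction (List.finRange n) with
  | nil => rfl
  | cons i L ih =>
      rw [List.foldr_cons, ih, List.flatMap_cons, mpdList_append, mpdList_replicate]

lemma count_toListI (v : Fin n → ℕ) (i : Fin n) : (toListI v).count i = v i := by
  rw [toListI]
  suffices H : ∀ L : List (Fin n), L.Nodup → i ∈ L →
      (L.flatMap fun j => List.replicate (v j) j).count i = v i from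
    H _ (List.nodup_finRange n) (List.mem_finRange i)
  intro L
  induction L with
  | nil => intro _ h2; simp at h2
  | cons a L ih =>
      intro h1 h2
      rw [List.flatMap_cons, List.count_append, List.count_replicate]
      rcases List.nodup_cons.1 h1 with ⟨ha, hL⟩
      by_cases hia : i = a
      · subst hia
        have hz : List.count i (L.flatMap fun j => List.replicate (v j) j) = 0 := by
          rw [List.count_eq_zero]
          intro hmem
          rcases List.mem_flatMap.1 hmem with ⟨j, hj, hjr⟩
          rw [List.eq_of_mem_replicate hjr] at ha
          exact ha hj
        rw [hz]
        simp
      · have hcond : ¬ (a = i) := fun h => hia h.symm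
        rw [if_neg (by simpa using hcond)]
        have hiL : i ∈ L := by
          rcases List.mem_cons.1 h2 with h | h
          · exact absurd h hia
          · exact h
        rw [ih hL hiL, zero_add]
end Aux



namespace Aux
variable {n : ℕ}

lemma pd_congr_nhds {f g : (Fin n → ℂ) → ℂ} {z : Fin n → ℂ} (h : f =ᶠ[𝓝 z] g) (i : Fin n) :
    pd i f z = pd i g z := by
  unfold pd
  rw [h.fderiv_eq]

lemma pd_congr_eqOn {f g : (Fin n → ℂ) → ℂ} {V : Set (Fin n → ℂ)} (hV : IsOpen V)
    (h : Set.EqOn f g V) (i : Fin n) : Set.EqOn (pd i f) (pd i g) V := fun z hz =>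
  pd_congr_nhds (Filter.eventuallyEq_of_mem (hV.mem_nhds hz) h) i

lemma SmoothAt.pd {f : (Fin n → ℂ) → ℂ} {z : Fin n → ℂ} (hf : SmoothAt f z) (i : Fin n) :
    SmoothAt (pd i f) z := by
  have h1 : ContDiffAt ℂ ⊤ (fderiv ℂ f) z := hf.fderiv_right (by simp)
  exact h1.clm_apply contDiffAt_const

lemma SmoothAt.dAt {f : (Fin n → ℂ) → ℂ} {z : Fin n → ℂ} (hf : SmoothAt f z) :
    DifferentiableAt ℂ f z := hf.differentiableAt (by simp)

lemma pd_add {f g : (Fin n → ℂ) → ℂ} {z : Fin n → ℂ} (hf : DifferentiableAt ℂ f z)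
    (hg : DifferentiableAt ℂ g z) (i : Fin n) :
    pd i (fun w => f w + g w) z = pd i f z + pd i g z := by
  unfold pd
  rw [fderiv_fun_add hf hg]
  rfl

lemma pd_mul {f g : (Fin n → ℂ) → ℂ} {z : Fin n → ℂ} (hf : DifferentiableAt ℂ f z)
    (hg : DifferentiableAt ℂ g z) (i : Fin n) :
    pd i (fun w => f w * g w) z = pd i f z * g z + f z * pd i g z := by
  unfold pd
  rw [fderiv_fun_mul hf hg]
  simp only [ContinuousLinearMap.add_apply, ContinuousLinearMap.smul_apply, smul_eq_mul]
  ring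

lemma pd_const (c : ℂ) (i : Fin n) (z : Fin n → ℂ) : pd i (fun _ => c) z = 0 := by
  unfold pd
  rw [fderiv_fun_const]
  rfl

lemma pd_sum {ι : Type*} (s : Finset ι) (f : ι → (Fin n → ℂ) → ℂ) {z : Fin n → ℂ}
    (hf : ∀ a ∈ s, DifferentiableAt ℂ (f a) z) (i : Fin n) :
    pd i (fun w => ∑ a ∈ s, f a w) z = ∑ a ∈ s, pd i (f a) z := by
  unfold pd
  rw [fderiv_fun_sum hf]
  simp

/-- Clairaut. -/
lemma pd_comm {f : (Fin n → ℂ) → ℂ} {z : Fin n → ℂ} (hf : SmoothAt f z) (i j : Fin n) :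
    pd i (pd j f) z = pd j (pd i f) z := by
  have hsymm : IsSymmSndFDerivAt ℂ f z := hf.isSymmSndFDerivAt (by exact_mod_cast le_top)
  have hd : DifferentiableAt ℂ (fderiv ℂ f) z :=
    (hf.fderiv_right (m := ⊤) (by simp)).differentiableAt (by simp)
  have key : ∀ a b : Fin n,
      pd a (pd b f) z = fderiv ℂ (fderiv ℂ f) z (Pi.single a 1) (Pi.single b 1) := by
    intro a b
    unfold pd
    rw [fderiv_clm_apply hd (differentiableAt_const _)]
    simp
  rw [key i j, key j i, hsymm (Pi.single i 1) (Pi.single j 1)]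
end Aux

section S3
namespace Aux
variable {n : ℕ}

lemma SmoothAt.mpdList {f : (Fin n → ℂ) → ℂ} {z : Fin n → ℂ} (hf : SmoothAt f z)
    (l : List (Fin n)) : SmoothAt (mpdList l f) z := by
  induction l with
  | nil => exact hf
  | cons i l ih => exact ih.pd i

lemma pd_mpdList_comm {f : (Fin n → ℂ) → ℂ} {V : Set (Fin n → ℂ)} (hV : IsOpen V)
    (hf : ∀ z ∈ V, SmoothAt f z) (i : Fin n) (l : List (Fin n)) :
    Set.EqOn (pd i (mpdList l f)) (mpdList l (pd i f)) V := by
  induction l with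
  | nil => exact fun z _ => rfl
  | cons j l ih =>
      intro z hz
      rw [mpdList_cons, mpdList_cons]
      have h1 : pd i (pd j (mpdList l f)) z = pd j (pd i (mpdList l f)) z :=
        pd_comm ((hf z hz).mpdList l) i j
      have h2 : pd j (pd i (Aux.mpdList l f)) z = pd j (Aux.mpdList l (pd i f)) z :=
        pd_congr_eqOn hV ih j hz
      exact h1.trans h2

lemma mpdList_perm {f : (Fin n → ℂ) → ℂ} {V : Set (Fin n → ℂ)} (hV : IsOpen V)
    (hf : ∀ z ∈ V, SmoothAt f z) {l₁ l₂ : List (Fin n)} (hp : l₁.Perm l₂) :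
    Set.EqOn (mpdList l₁ f) (mpdList l₂ f) V := by
  induction hp with
  | nil => exact fun z _ => rfl
  | cons x _ ih => exact pd_congr_eqOn hV ih x
  | swap x y l =>
      intro z hz
      exact pd_comm ((hf z hz).mpdList l) y x
  | trans _ _ ih1 ih2 => exact ih1.trans (by intro z hz; exact ih2 hz)

/-- moving one derivative into a multi-index -/
lemma pd_mpd {f : (Fin n → ℂ) → ℂ} {V : Set (Fin n → ℂ)} (hV : IsOpen V)
    (hf : ∀ z ∈ V, SmoothAt f z) (v : Fin n → ℕ) (j : Fin n) :
    Set.EqOn (pd j (mpd v f)) (mpd (fun t => v t + if t = j then 1 else 0) f) V := by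
  have h1 : pd j (mpd v f) = mpdList (j :: toListI v) f := by
    rw [mpd_eq_mpdList, mpdList_cons]
  have hperm : (j :: toListI v).Perm (toListI fun t => v t + if t = j then 1 else 0) := by
    rw [List.perm_iff_count]
    intro a
    rw [List.count_cons, count_toListI, count_toListI]
    by_cases h : a = j
    · simp [h]
    · have h2 : ¬ j = a := fun hja => h hja.symm
      simp [h, h2]
  rw [h1, mpd_eq_mpdList]
  exact mpdList_perm hV hf hperm

/-- chain rule, base case -/
lemma pd_comp {g : (Fin n → ℂ) → (Fin n → ℂ)} {Y : (Fin n → ℂ) → ℂ} {z : Fin n → ℂ}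
    (hg : DifferentiableAt ℂ g z) (hY : DifferentiableAt ℂ Y (g z)) (i : Fin n) :
    pd i (fun w => Y (g w)) z = ∑ j, pd j Y (g z) * pd i (fun w => g w j) z := by
  have hcomp : fderiv ℂ (fun w => Y (g w)) z = (fderiv ℂ Y (g z)).comp (fderiv ℂ g z) :=
    fderiv_comp z hY hg
  unfold pd
  rw [hcomp]
  simp only [ContinuousLinearMap.coe_comp', Function.comp_apply]
  have hvec : fderiv ℂ g z (Pi.single i 1)
      = ∑ j, (fderiv ℂ g z (Pi.single i 1) j) • (Pi.single j 1 : Fin n → ℂ) := by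
    ext t
    simp [Finset.sum_apply, Pi.single_apply]
  rw [hvec, map_sum]
  congr 1
  ext j
  rw [map_smul]
  have hco : fderiv ℂ (fun w => g w j) z
      = ((ContinuousLinearMap.proj j : (Fin n → ℂ) →L[ℂ] ℂ)).comp (fderiv ℂ g z) := by
    have := fderiv_comp (𝕜 := ℂ) z
      (ContinuousLinearMap.differentiableAt (ContinuousLinearMap.proj j : (Fin n → ℂ) →L[ℂ] ℂ)) hg
    rw [ContinuousLinearMap.fderiv] at this
    exact this
  rw [hco]
  simp [mul_comm]
end Aux
end S3

namespace Aux
variable {n k : ℕ}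

def mi (u : MIdx n k) : Fin n → ℕ := fun t => (u.1 t : ℕ)

def deg (u : MIdx n k) : ℕ := ∑ i, mi u i

lemma deg_le (u : MIdx n k) : deg u ≤ k := u.2

lemma mi_le_deg (u : MIdx n k) (j : Fin n) : mi u j ≤ deg u :=
  Finset.single_le_sum (f := mi u) (fun _ _ => Nat.zero_le _) (Finset.mem_univ j)

lemma mi_injective : Function.Injective (mi (n := n) (k := k)) := by
  intro u v h
  apply Subtype.ext
  funext t
  exact Fin.ext (congrFun h t)

def mk' (v : Fin n → ℕ) (h : ∑ i, v i ≤ k) : MIdx n k :=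
  ⟨fun t => ⟨v t, Nat.lt_succ_of_le (le_trans
      (Finset.single_le_sum (f := v) (fun _ _ => Nat.zero_le _) (Finset.mem_univ t)) h)⟩,
    by simpa using h⟩

@[simp] lemma mi_mk' (v : Fin n → ℕ) (h : ∑ i, v i ≤ k) : mi (mk' v h) = v := rfl

def zeroIdx : MIdx n k := mk' (fun _ => 0) (by simp)

@[simp] lemma mi_zeroIdx : mi (zeroIdx : MIdx n k) = fun _ => 0 := rfl

def succAt (u : MIdx n k) (h : deg u < k) (j : Fin n) : MIdx n k :=
  mk' (fun t => mi u t + if t = j then 1 else 0) (by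
    have : ∑ t, (mi u t + if t = j then 1 else 0) = deg u + 1 := by
      rw [Finset.sum_add_distrib]
      simp [deg]
    rw [this]
    omega)

lemma mi_succAt (u : MIdx n k) (h : deg u < k) (j : Fin n) :
    mi (succAt u h j) = fun t => mi u t + if t = j then 1 else 0 := rfl

lemma deg_succAt (u : MIdx n k) (h : deg u < k) (j : Fin n) :
    deg (succAt u h j) = deg u + 1 := by
  simp only [deg, mi_succAt, Finset.sum_add_distrib]
  simp [deg]

def IsSucc (u'' u' : MIdx n k) (j : Fin n) : Prop :=
  mi u'' = fun t => mi u' t + if t = j then 1 else 0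

instance (u'' u' : MIdx n k) (j : Fin n) : Decidable (IsSucc u'' u' j) := by
  unfold IsSucc; infer_instance

lemma isSucc_succAt (u' : MIdx n k) (h : deg u' < k) (j : Fin n) :
    IsSucc (succAt u' h j) u' j := mi_succAt u' h j

lemma IsSucc.deg_lt {u'' u' : MIdx n k} {j : Fin n} (h : IsSucc u'' u' j) : deg u' < k := by
  have : deg u'' = deg u' + 1 := by
    simp only [deg, IsSucc] at h ⊢
    rw [h, Finset.sum_add_distrib]
    simp
  have := deg_le u''
  omega

lemma IsSucc.eq_succAt {u'' u' : MIdx n k} {j : Fin n} (h : IsSucc u'' u' j) :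
    u'' = succAt u' h.deg_lt j := mi_injective (by rw [h, mi_succAt])

end Aux
namespace Aux
variable {n k : ℕ}

open MvPolynomial

/-- the assignment of variables: `X (j, w) ↦ ∂^w g_j (z)` -/
noncomputable def evalFun (g : (Fin n → ℂ) → Fin n → ℂ) (z : Fin n → ℂ) :
    Fin n × MIdx n k → ℂ :=
  fun iv => mpd (fun t => (iv.2.1 t : ℕ)) (fun w => g w iv.1) z

noncomputable def evalE (g : (Fin n → ℂ) → Fin n → ℂ) (z : Fin n → ℂ)
    (P : MvPolynomial (Fin n × MIdx n k) ℂ) : ℂ :=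
  MvPolynomial.eval (evalFun g z) P

lemma evalFun_eq_mpd (g : (Fin n → ℂ) → Fin n → ℂ) (z : Fin n → ℂ) (iv : Fin n × MIdx n k) :
    evalFun g z iv = mpd (mi iv.2) (fun w => g w iv.1) z := rfl

/-- formal derivative operator corresponding to `∂ᵢ` -/
noncomputable def Dop (i : Fin n) (P : MvPolynomial (Fin n × MIdx n k) ℂ) :
    MvPolynomial (Fin n × MIdx n k) ℂ :=
  ∑ jw : Fin n × MIdx n k, (MvPolynomial.pderiv jw P) *
    (if h : deg jw.2 < k then MvPolynomial.X (jw.1, succAt jw.2 h i) else 0)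

lemma Dop_add (i : Fin n) (P Q : MvPolynomial (Fin n × MIdx n k) ℂ) :
    Dop i (P + Q) = Dop i P + Dop i Q := by
  unfold Dop
  rw [← Finset.sum_add_distrib]
  refine Finset.sum_congr rfl fun jw _ => ?_
  rw [map_add, add_mul]

@[simp] lemma Dop_zero (i : Fin n) : Dop i (0 : MvPolynomial (Fin n × MIdx n k) ℂ) = 0 := by
  unfold Dop
  simp

@[simp] lemma Dop_C (i : Fin n) (c : ℂ) :
    Dop i (MvPolynomial.C c : MvPolynomial (Fin n × MIdx n k) ℂ) = 0 := by
  unfold Dop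
  simp

lemma Dop_mul (i : Fin n) (P Q : MvPolynomial (Fin n × MIdx n k) ℂ) :
    Dop i (P * Q) = Dop i P * Q + P * Dop i Q := by
  unfold Dop
  rw [Finset.sum_mul, Finset.mul_sum, ← Finset.sum_add_distrib]
  refine Finset.sum_congr rfl fun jw _ => ?_
  rw [pderiv_mul]
  ring

lemma Dop_X (i : Fin n) (jw : Fin n × MIdx n k) :
    Dop i (MvPolynomial.X jw) =
      (if h : deg jw.2 < k then MvPolynomial.X (jw.1, succAt jw.2 h i) else 0) := by
  unfold Dop
  rw [Finset.sum_eq_single jw]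
  · rw [pderiv_X_self, one_mul]
  · intro b _ hb
    rw [pderiv_X_of_ne hb.symm, zero_mul]
  · intro h
    exact absurd (Finset.mem_univ jw) h

/-- `Crec l u`: entries of the chain-rule matrix as formal polynomials. -/
noncomputable def Crec : List (Fin n) → MIdx n k → MvPolynomial (Fin n × MIdx n k) ℂ
  | [], u => if u = zeroIdx then 1 else 0
  | i :: l, u => Dop i (Crec l u) +
      ∑ j : Fin n, ∑ u' : MIdx n k,
        if IsSucc u u' j then MvPolynomial.X (j, mk' (fun t => if t = i then min 1 k else 0)
          (by simp [Finset.sum_ite_eq'])) * Crec l u' else 0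

/-- the single-index `eᵢ` (valid when `k ≥ 1`) -/
noncomputable def eIdx (i : Fin n) : MIdx n k :=
  mk' (fun t => if t = i then min 1 k else 0) (by simp [Finset.sum_ite_eq'])

lemma Crec_cons (i : Fin n) (l : List (Fin n)) (u : MIdx n k) :
    Crec (i :: l) u = Dop i (Crec l u) +
      ∑ j : Fin n, ∑ u' : MIdx n k,
        if IsSucc u u' j then MvPolynomial.X (j, eIdx i) * Crec l u' else 0 := rfl

lemma Crec_eq_zero {l : List (Fin n)} {u : MIdx n k} (h : l.length < deg u) :
    Crec l u = 0 := by
  induction l generalizing u with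
  | nil =>
      have : u ≠ zeroIdx := by
        intro he
        rw [he] at h
        simp [deg] at h
      simp [Crec, this]
  | cons i l ih =>
      rw [Crec_cons]
      have h1 : Crec l u = 0 := ih (by simp at h; omega)
      rw [h1, Dop_zero, zero_add]
      refine Finset.sum_eq_zero fun j _ => Finset.sum_eq_zero fun u' _ => ?_
      by_cases hs : IsSucc u u' j
      · have hd : deg u = deg u' + 1 := by
          simp only [deg, IsSucc] at hs ⊢
          rw [hs, Finset.sum_add_distrib]
          simp
        rw [if_pos hs, ih (by simp at h; omega), mul_zero]
      · rw [if_neg hs]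

end Aux
namespace Aux
variable {n k : ℕ}
open MvPolynomial

lemma supported_adjoin (s : Set (Fin n × MIdx n k)) :
    MvPolynomial.supported ℂ s = Algebra.adjoin ℂ (MvPolynomial.X '' s) := rfl

lemma Dop_supported {m : ℕ} {P : MvPolynomial (Fin n × MIdx n k) ℂ}
    (hP : P ∈ MvPolynomial.supported ℂ {iv : Fin n × MIdx n k | deg iv.2 ≤ m}) (i : Fin n) :
    Dop i P ∈ MvPolynomial.supported ℂ {iv : Fin n × MIdx n k | deg iv.2 ≤ m + 1} := by
  rw [supported_adjoin] at hP
  induction hP using Algebra.adjoin_induction with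
  | mem x hx =>
      obtain ⟨jw, hjw, rfl⟩ := hx
      rw [Dop_X]
      split
      · rw [X_mem_supported]
        simpa [deg_succAt] using Nat.add_le_add_right hjw 1
      · exact Subalgebra.zero_mem _
  | algebraMap r =>
      rw [show (algebraMap ℂ (MvPolynomial (Fin n × MIdx n k) ℂ)) r = MvPolynomial.C r from rfl,
        Dop_C]
      exact Subalgebra.zero_mem _
  | add x y hx hy ihx ihy =>
      rw [Dop_add]; exact Subalgebra.add_mem _ ihx ihy
  | mul x y hx hy ihx ihy =>
      rw [Dop_mul]
      have hmono : MvPolynomial.supported ℂ {iv : Fin n × MIdx n k | deg iv.2 ≤ m}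
          ≤ MvPolynomial.supported ℂ {iv : Fin n × MIdx n k | deg iv.2 ≤ m + 1} :=
        MvPolynomial.supported_mono (fun iv h => le_trans h (Nat.le_succ m))
      exact Subalgebra.add_mem _
        (Subalgebra.mul_mem _ ihx (hmono ((supported_adjoin _).symm ▸ hy)))
        (Subalgebra.mul_mem _ (hmono ((supported_adjoin _).symm ▸ hx)) ihy)

lemma Crec_supported (l : List (Fin n)) (u : MIdx n k) :
    Crec l u ∈ MvPolynomial.supported ℂ {iv : Fin n × MIdx n k | deg iv.2 ≤ l.length} := by
  induction l generalizing u with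
  | nil =>
      unfold Crec
      split
      · exact Subalgebra.one_mem _
      · exact Subalgebra.zero_mem _
  | cons i l ih =>
      rw [Crec_cons]
      have hmono : MvPolynomial.supported ℂ {iv : Fin n × MIdx n k | deg iv.2 ≤ l.length}
          ≤ MvPolynomial.supported ℂ {iv : Fin n × MIdx n k | deg iv.2 ≤ l.length + 1} :=
        MvPolynomial.supported_mono (fun iv h => le_trans h (Nat.le_succ _))
      refine Subalgebra.add_mem _ ?_ ?_
      · simpa using Dop_supported (ih u) i
      · refine Subalgebra.sum_mem _ fun j _ => Subalgebra.sum_mem _ fun u' _ => ?_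
        split
        · refine Subalgebra.mul_mem _ ?_ (hmono (ih u'))
          rw [X_mem_supported]
          have : deg (eIdx i : MIdx n k) ≤ 1 := by
            simp [eIdx, deg, Finset.sum_ite_eq']
          simpa using le_trans this (by omega)
        · exact Subalgebra.zero_mem _
end Aux
namespace Aux
variable {n k : ℕ}
open MvPolynomial

lemma SmoothAt.mpd {f : (Fin n → ℂ) → ℂ} {z : Fin n → ℂ} (hf : SmoothAt f z) (v : Fin n → ℕ) :
    SmoothAt (_root_.mpd v f) z := by
  rw [mpd_eq_mpdList]
  exact hf.mpdList _

lemma evalE_smoothAt {g : (Fin n → ℂ) → Fin n → ℂ} {z : Fin n → ℂ}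
    (hg : ∀ j, SmoothAt (fun w => g w j) z) (P : MvPolynomial (Fin n × MIdx n k) ℂ) :
    SmoothAt (fun w => evalE g w P) z := by
  induction P using MvPolynomial.induction_on with
  | C c => simpa [evalE] using contDiffAt_const
  | add p q ihp ihq =>
      have : (fun w => evalE g w (p + q)) = fun w => evalE g w p + evalE g w q := by
        funext w; simp [evalE]
      rw [this]; exact ihp.add ihq
  | mul_X p iv ihp =>
      have : (fun w => evalE g w (p * X iv)) = fun w => evalE g w p * evalFun g w iv := by
        funext w; simp [evalE]
      rw [this]
      exact ihp.mul ((hg iv.1).mpd _)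

lemma evalE_dAt {g : (Fin n → ℂ) → Fin n → ℂ} {z : Fin n → ℂ}
    (hg : ∀ j, SmoothAt (fun w => g w j) z) (P : MvPolynomial (Fin n × MIdx n k) ℂ) :
    DifferentiableAt ℂ (fun w => evalE g w P) z := (evalE_smoothAt hg P).dAt

/-- The key formal/analytic compatibility: `∂ᵢ (E P) = E (Dop i P)` for polynomials
supported in degrees `< k`. -/
lemma pd_evalE {g : (Fin n → ℂ) → Fin n → ℂ} {V : Set (Fin n → ℂ)} (hV : IsOpen V)
    (hg : ∀ z ∈ V, ∀ j, SmoothAt (fun w => g w j) z) {m : ℕ} (hm : m < k)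
    {P : MvPolynomial (Fin n × MIdx n k) ℂ}
    (hP : P ∈ MvPolynomial.supported ℂ {iv : Fin n × MIdx n k | deg iv.2 ≤ m}) (i : Fin n) :
    ∀ z ∈ V, pd i (fun w => evalE g w P) z = evalE g z (Dop i P) := by
  rw [supported_adjoin] at hP
  induction hP using Algebra.adjoin_induction with
  | mem x hx =>
      obtain ⟨jw, hjw, rfl⟩ := hx
      intro z hz
      have hdeg : deg jw.2 < k := lt_of_le_of_lt hjw hm
      have h1 : (fun w => evalE g w (X jw)) = _root_.mpd (mi jw.2) (fun w => g w jw.1) := by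
        funext w; simp [evalE, evalFun_eq_mpd]
      rw [h1, Dop_X, dif_pos hdeg]
      have h2 := pd_mpd hV (fun z' hz' => hg z' hz' jw.1) (mi jw.2) i hz
      rw [h2]
      simp only [evalE, eval_X, evalFun_eq_mpd, mi_succAt]
  | algebraMap r =>
      intro z hz
      have h1 : (fun w => evalE g w ((algebraMap ℂ (MvPolynomial (Fin n × MIdx n k) ℂ)) r))
          = fun _ => r := by funext w; simp [evalE]
      rw [h1, show Dop i ((algebraMap ℂ (MvPolynomial (Fin n × MIdx n k) ℂ)) r) = 0 from Dop_C i r]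
      rw [pd_const]
      simp [evalE]
  | add x y hx hy ihx ihy =>
      intro z hz
      have h1 : (fun w => evalE g w (x + y)) = fun w => evalE g w x + evalE g w y := by
        funext w; simp [evalE]
      rw [h1, pd_add (evalE_dAt (hg z hz) x) (evalE_dAt (hg z hz) y) i, ihx z hz, ihy z hz,
        Dop_add]
      simp [evalE]
  | mul x y hx hy ihx ihy =>
      intro z hz
      have h1 : (fun w => evalE g w (x * y)) = fun w => evalE g w x * evalE g w y := by
        funext w; simp [evalE]
      rw [h1, pd_mul (evalE_dAt (hg z hz) x) (evalE_dAt (hg z hz) y) i, ihx z hz, ihy z hz,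
        Dop_mul]
      simp [evalE]
end Aux
namespace Aux
variable {n k : ℕ}
open MvPolynomial

lemma mpd_zero (f : (Fin n → ℂ) → ℂ) : mpd (fun _ => 0) f = f := by
  rw [mpd_eq_mpdList]
  have h : toListI (fun _ : Fin n => (0:ℕ)) = ([] : List (Fin n)) := by
    simp [toListI]
  rw [h, mpdList_nil]

lemma mpd_eIdx (hk : 0 < k) (i : Fin n) (f : (Fin n → ℂ) → ℂ) :
    mpd (mi (eIdx i : MIdx n k)) f = pd i f := by
  have hmi : mi (eIdx i : MIdx n k) = fun t => if t = i then 1 else 0 := by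
    funext t
    simp [eIdx, Nat.min_eq_left hk]
  rw [hmi, mpd_eq_mpdList]
  have h : toListI (fun t : Fin n => if t = i then 1 else 0) = [i] := by
    rw [← List.perm_singleton]
    rw [List.perm_iff_count]
    intro a
    rw [count_toListI]
    by_cases h : a = i
    · subst h; simp
    · have h2 : ¬ i = a := fun hh => h hh.symm
      simp [h, h2]
  rw [h]
  rfl

lemma sum_isSucc (u' : MIdx n k) (j : Fin n) (f : MIdx n k → ℂ) :
    (∑ u : MIdx n k, if IsSucc u u' j then f u else 0)
      = if h' : deg u' < k then f (succAt u' h' j) else 0 := by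
  by_cases h' : deg u' < k
  · rw [dif_pos h', Finset.sum_eq_single (succAt u' h' j)]
    · rw [if_pos (isSucc_succAt u' h' j)]
    · intro u _ hu
      rw [if_neg]
      intro hs
      exact hu hs.eq_succAt
    · intro h; exact absurd (Finset.mem_univ _) h
  · rw [dif_neg h']
    refine Finset.sum_eq_zero fun u _ => ?_
    rw [if_neg]
    intro hs
    exact h' hs.deg_lt

/-- The main chain rule identity. -/
lemma main_chain {g : (Fin n → ℂ) → Fin n → ℂ} {V : Set (Fin n → ℂ)} (hV : IsOpen V)
    (hg : ∀ z ∈ V, ∀ j, SmoothAt (fun w => g w j) z) {y : (Fin n → ℂ) → ℂ}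
    (hy : ContDiff ℂ ⊤ y) (hk : 0 < k) :
    ∀ l : List (Fin n), l.length ≤ k → ∀ z ∈ V,
      mpdList l (fun w => y (g w)) z
        = ∑ u : MIdx n k, evalE g z (Crec l u) * mpd (mi u) y (g z) := by
  intro l
  induction l with
  | nil =>
      intro _ z hz
      rw [mpdList_nil, Finset.sum_eq_single zeroIdx]
      · have : mi (zeroIdx : MIdx n k) = fun _ => 0 := rfl
        simp [Crec, evalE, this, mpd_zero]
      · intro u _ hu
        simp [Crec, evalE, hu]
      · intro h; exact absurd (Finset.mem_univ _) h
  | cons i l ih =>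
      intro hlen z hz
      have hlk : l.length < k := hlen
      have hgz : DifferentiableAt ℂ g z := differentiableAt_pi.mpr fun j => (hg z hz j).dAt
      have hymp : ∀ u : MIdx n k, SmoothAt (mpd (mi u) y) (g z) :=
        fun u => SmoothAt.mpd (hy.contDiffAt) (mi u)
      have hdA : ∀ u : MIdx n k, DifferentiableAt ℂ (fun w => evalE g w (Crec l u)) z :=
        fun u => evalE_dAt (hg z hz) _
      have hdB : ∀ u : MIdx n k, DifferentiableAt ℂ (fun w => mpd (mi u) y (g w)) z :=
        fun u => ((hymp u).dAt).comp z hgz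
      -- step 1: move the outer derivative inside the sum
      have heq : mpdList (i :: l) (fun w => y (g w)) z
          = ∑ u : MIdx n k,
              pd i (fun w => evalE g w (Crec l u) * mpd (mi u) y (g w)) z := by
        rw [mpdList_cons]
        have h1 : pd i (mpdList l fun w => y (g w)) z
            = pd i (fun z' => ∑ u : MIdx n k, evalE g z' (Crec l u) * mpd (mi u) y (g z')) z := by
          apply pd_congr_nhds
          filter_upwards [hV.mem_nhds hz] with w hw
          exact ih (le_of_lt hlk) w hw
        rw [h1]
        exact pd_sum Finset.univ _ (fun u _ => (hdA u).mul (hdB u)) i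
      -- step 2: expand each derivative via Leibniz and the chain rule
      have hterm : ∀ u : MIdx n k,
          pd i (fun w => evalE g w (Crec l u) * mpd (mi u) y (g w)) z
            = evalE g z (Dop i (Crec l u)) * mpd (mi u) y (g z)
              + evalE g z (Crec l u)
                * ∑ j, pd j (mpd (mi u) y) (g z) * pd i (fun w => g w j) z := by
        intro u
        rw [pd_mul (hdA u) (hdB u)]
        rw [pd_evalE hV hg hlk (Crec_supported l u) i z hz]
        rw [pd_comp hgz ((hymp u).dAt) i]
      -- step 3: rewrite the inner chain-rule sum using `succAt` or vanishing
      have hterm2 : ∀ u : MIdx n k,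
          evalE g z (Crec l u) * ∑ j, pd j (mpd (mi u) y) (g z) * pd i (fun w => g w j) z
            = if h' : deg u < k then
                ∑ j, evalE g z (Crec l u)
                  * (mpd (mi (succAt u h' j)) y (g z) * pd i (fun w => g w j) z)
              else 0 := by
        intro u
        by_cases h' : deg u < k
        · rw [dif_pos h', Finset.mul_sum]
          refine Finset.sum_congr rfl fun j _ => ?_
          have hsw := pd_mpd isOpen_univ (fun z' _ => hy.contDiffAt) (mi u) j (Set.mem_univ (g z))
          rw [hsw]
          rw [mi_succAt]
        · rw [dif_neg h']
          have h0 : Crec l u = 0 := by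
            apply Crec_eq_zero
            have := deg_le u
            omega
          rw [h0]
          simp [evalE]
      -- step 4: identify with the recursive definition of `Crec`
      have hRHS : ∀ u : MIdx n k,
          evalE g z (Crec (i :: l) u)
            = evalE g z (Dop i (Crec l u))
              + ∑ j : Fin n, ∑ u' : MIdx n k,
                  if IsSucc u u' j then pd i (fun w => g w j) z * evalE g z (Crec l u') else 0 := by
        intro u
        rw [Crec_cons]
        simp only [evalE, map_add, map_sum]
        congr 1
        refine Finset.sum_congr rfl fun j _ => Finset.sum_congr rfl fun u' _ => ?_
        rw [apply_ite (MvPolynomial.eval (evalFun g z)), map_mul, map_zero, eval_X]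
        have : evalFun (n := n) (k := k) g z (j, eIdx i) = pd i (fun w => g w j) z := by
          rw [evalFun_eq_mpd]
          exact congrFun (mpd_eIdx hk i (fun w => g w j)) z
        rw [this]
      -- put everything together
      have hL : ∑ u : MIdx n k, pd i (fun w => evalE g w (Crec l u) * mpd (mi u) y (g w)) z
          = (∑ u : MIdx n k, evalE g z (Dop i (Crec l u)) * mpd (mi u) y (g z))
            + ∑ u : MIdx n k, (if h' : deg u < k then
                ∑ j, evalE g z (Crec l u)
                  * (mpd (mi (succAt u h' j)) y (g z) * pd i (fun w => g w j) z)
              else 0) := by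
        rw [← Finset.sum_add_distrib]
        refine Finset.sum_congr rfl fun u _ => ?_
        rw [hterm u, hterm2 u]
      have expand : ∑ u : MIdx n k, evalE g z (Crec (i :: l) u) * mpd (mi u) y (g z)
          = (∑ u : MIdx n k, evalE g z (Dop i (Crec l u)) * mpd (mi u) y (g z))
            + ∑ u : MIdx n k, (∑ j : Fin n, ∑ u' : MIdx n k,
                if IsSucc u u' j then pd i (fun w => g w j) z * evalE g z (Crec l u') else 0)
                  * mpd (mi u) y (g z) := by
        rw [← Finset.sum_add_distrib]
        exact Finset.sum_congr rfl fun u _ => by rw [hRHS u, add_mul]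
      have hsum2 : ∑ u : MIdx n k, (∑ j : Fin n, ∑ u' : MIdx n k,
              if IsSucc u u' j then pd i (fun w => g w j) z * evalE g z (Crec l u') else 0)
                * mpd (mi u) y (g z)
          = ∑ u' : MIdx n k, (if h' : deg u' < k then
              ∑ j, evalE g z (Crec l u')
                * (mpd (mi (succAt u' h' j)) y (g z) * pd i (fun w => g w j) z)
            else 0) := by
        have step1 : ∑ u : MIdx n k, (∑ j : Fin n, ∑ u' : MIdx n k,
              if IsSucc u u' j then pd i (fun w => g w j) z * evalE g z (Crec l u') else 0)
                * mpd (mi u) y (g z)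
            = ∑ u : MIdx n k, ∑ j : Fin n, ∑ u' : MIdx n k,
              if IsSucc u u' j then
                pd i (fun w => g w j) z * evalE g z (Crec l u') * mpd (mi u) y (g z)
              else 0 := by
          refine Finset.sum_congr rfl fun u _ => ?_
          rw [Finset.sum_mul]
          refine Finset.sum_congr rfl fun j _ => ?_
          rw [Finset.sum_mul]
          refine Finset.sum_congr rfl fun u' _ => ?_
          split
          · rfl
          · rw [zero_mul]
        rw [step1, Finset.sum_comm]
        have step2 : ∀ j : Fin n, ∑ u : MIdx n k, ∑ u' : MIdx n k,
              (if IsSucc u u' j then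
                pd i (fun w => g w j) z * evalE g z (Crec l u') * mpd (mi u) y (g z)
              else 0)
            = ∑ u' : MIdx n k, (if h' : deg u' < k then
                pd i (fun w => g w j) z * evalE g z (Crec l u')
                  * mpd (mi (succAt u' h' j)) y (g z)
              else 0) := by
          intro j
          rw [Finset.sum_comm]
          refine Finset.sum_congr rfl fun u' _ => ?_
          exact sum_isSucc u' j
            (fun u => pd i (fun w => g w j) z * evalE g z (Crec l u') * mpd (mi u) y (g z))
        rw [Finset.sum_congr rfl fun j (_ : j ∈ Finset.univ) => step2 j, Finset.sum_comm]
        refine Finset.sum_congr rfl fun u' _ => ?_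
        by_cases h' : deg u' < k
        · simp only [dif_pos h']
          refine Finset.sum_congr rfl fun j _ => ?_
          ring
        · simp only [dif_neg h']
          exact Finset.sum_const_zero
      rw [heq, hL, expand]
      congr 1
      exact hsum2.symm
end Aux
namespace Aux
variable {n k : ℕ}

noncomputable def Pmon (c : Fin n → ℕ) (w : Fin n → ℂ) : (Fin n → ℂ) → ℂ :=
  fun z => ∏ t, (z t - w t) ^ (c t)

lemma contDiff_Pmon (c : Fin n → ℕ) (w : Fin n → ℂ) : ContDiff ℂ ⊤ (Pmon c w) := by
  unfold Pmon
  apply contDiff_prod (f := fun (t : Fin n) (z : Fin n → ℂ) => (z t - w t) ^ (c t))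
  intro t _
  exact ((contDiff_apply ℂ ℂ t).sub contDiff_const).pow (c t)

lemma differentiable_Pmon (c : Fin n → ℕ) (w : Fin n → ℂ) (z : Fin n → ℂ) :
    DifferentiableAt ℂ (Pmon c w) z := ((contDiff_Pmon c w).differentiable (by simp)) z

lemma pd_factor (m : ℕ) (a : ℂ) (t i : Fin n) (z : Fin n → ℂ) :
    pd i (fun z' => (z' t - a) ^ m) z
      = if t = i then (m : ℂ) * (z t - a) ^ (m - 1) else 0 := by
  have hq : HasDerivAt (fun x : ℂ => (x - a) ^ m) ((m : ℂ) * (z t - a) ^ (m - 1)) (z t) := by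
    have h1 := ((hasDerivAt_id (z t)).sub_const a).fun_pow m
    simpa using h1
  have hproj : HasFDerivAt (fun z' : Fin n → ℂ => z' t)
      (ContinuousLinearMap.proj t : (Fin n → ℂ) →L[ℂ] ℂ) z :=
    (ContinuousLinearMap.proj t : (Fin n → ℂ) →L[ℂ] ℂ).hasFDerivAt
  have hcomp := hq.comp_hasFDerivAt z hproj
  unfold pd
  rw [show (fun z' : Fin n → ℂ => (z' t - a) ^ m)
      = ((fun x : ℂ => (x - a) ^ m) ∘ fun z' : Fin n → ℂ => z' t) from rfl, hcomp.fderiv]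
  simp only [ContinuousLinearMap.coe_smul', Pi.smul_apply, ContinuousLinearMap.proj_apply,
    smul_eq_mul]
  rw [Pi.single_apply]
  by_cases h : t = i
  · rw [if_pos h, if_pos h, mul_one]
  · rw [if_neg h, if_neg h, mul_zero]

lemma pd_prod (S : Finset (Fin n)) (f : Fin n → (Fin n → ℂ) → ℂ)
    (hf : ∀ t, Differentiable ℂ (f t)) (i : Fin n) (z : Fin n → ℂ) :
    pd i (fun z' => ∏ t ∈ S, f t z') z
      = ∑ t ∈ S, pd i (f t) z * ∏ t' ∈ S.erase t, f t' z := by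
  classical
  have h := HasFDerivAt.finset_prod (u := S) (g := f) (g' := fun t => fderiv ℂ (f t) z)
    (fun t _ => ((hf t) z).hasFDerivAt)
  unfold pd
  rw [h.fderiv]
  simp only [ContinuousLinearMap.coe_sum', Finset.sum_apply, ContinuousLinearMap.coe_smul',
    Pi.smul_apply, smul_eq_mul]
  exact Finset.sum_congr rfl fun t _ => mul_comm _ _
end Aux
namespace Aux
variable {n k : ℕ}

lemma pd_Pmon (c : Fin n → ℕ) (w : Fin n → ℂ) (i : Fin n) :
    pd i (Pmon c w) = fun z => (c i : ℂ) * Pmon (Function.update c i (c i - 1)) w z := by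
  funext z
  have hfac : ∀ t : Fin n, Differentiable ℂ (fun z' : Fin n → ℂ => (z' t - w t) ^ (c t)) := by
    intro t
    exact (((contDiff_apply ℂ ℂ t).sub contDiff_const).pow (c t)).differentiable (by simp : (⊤ : WithTop ℕ∞) ≠ 0)
  rw [show Pmon c w = fun z' => ∏ t, (z' t - w t) ^ (c t) from rfl,
    pd_prod Finset.univ _ hfac i z]
  rw [Finset.sum_eq_single i]
  · rw [pd_factor, if_pos rfl]
    by_cases hc : c i = 0
    · simp [hc]
    · have h2 : Pmon (Function.update c i (c i - 1)) w z
          = (z i - w i) ^ (c i - 1) * ∏ t ∈ Finset.univ.erase i, (z t - w t) ^ (c t) := by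
        unfold Pmon
        rw [← Finset.prod_erase_mul Finset.univ _ (Finset.mem_univ i)]
        rw [Function.update_self, mul_comm]
        congr 1
        refine Finset.prod_congr rfl fun t ht => ?_
        rw [Function.update_of_ne (Finset.ne_of_mem_erase ht)]
      rw [h2]
      ring
  · intro t _ hti
    rw [pd_factor, if_neg hti, zero_mul]
  · intro h; exact absurd (Finset.mem_univ i) h

lemma pd_const_mul (a : ℂ) (f : (Fin n → ℂ) → ℂ) (hf : Differentiable ℂ f) (i : Fin n) :
    pd i (fun z => a * f z) = fun z => a * pd i f z := by
  funext z
  unfold pd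
  rw [fderiv_const_mul (hf z) a]
  simp

lemma mpdList_Pmon (c : Fin n → ℕ) (w : Fin n → ℂ) (l : List (Fin n)) :
    mpdList l (Pmon c w)
      = fun z => (∏ t, ((c t).descFactorial (l.count t) : ℂ))
          * Pmon (fun t => c t - l.count t) w z := by
  induction l with
  | nil => funext z; simp [Pmon]
  | cons i l ih =>
      rw [mpdList_cons, ih, pd_const_mul _ _ ((contDiff_Pmon _ w).differentiable (by simp)) i,
        ]
      funext z
      rw [show pd i (Pmon (fun t => c t - l.count t) w)
          = fun z => ((c i - l.count i : ℕ) : ℂ)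
            * Pmon (Function.update (fun t => c t - l.count t) i (c i - l.count i - 1)) w z
        from pd_Pmon _ w i]
      have hupd : Function.update (fun t => c t - l.count t) i (c i - l.count i - 1)
          = fun t => c t - (i :: l).count t := by
        funext t
        by_cases ht : t = i
        · subst ht
          rw [Function.update_self, List.count_cons_self]
          omega
        · rw [Function.update_of_ne ht, List.count_cons_of_ne (Ne.symm ht)]
      have hcoef : (∏ t, ((c t).descFactorial ((i :: l).count t) : ℂ))
          = (∏ t, ((c t).descFactorial (l.count t) : ℂ)) * ((c i - l.count i : ℕ) : ℂ) := by
        have hsplit : ∀ t : Fin n, ((c t).descFactorial ((i :: l).count t) : ℂ)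
            = ((c t).descFactorial (l.count t) : ℂ) * (if t = i then ((c i - l.count i : ℕ) : ℂ) else 1) := by
          intro t
          by_cases ht : t = i
          · subst ht
            rw [if_pos rfl, List.count_cons_self, Nat.descFactorial_succ]
            push_cast
            ring
          · rw [if_neg ht, List.count_cons_of_ne (Ne.symm ht), mul_one]
        rw [Finset.prod_congr rfl fun t _ => hsplit t, Finset.prod_mul_distrib,
          Finset.prod_ite_eq' Finset.univ i (fun _ => ((c i - l.count i : ℕ) : ℂ))]
        simp
      rw [hupd, hcoef]
      ring

lemma mpd_Pmon_delta (hk : 0 < k) (w : Fin n → ℂ) (u v : MIdx n k) :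
    mpd (mi v) (Pmon (mi u) w) w
      = if v = u then (∏ t, ((mi u t).factorial : ℂ)) else 0 := by
  rw [mpd_eq_mpdList, mpdList_Pmon]
  beta_reduce
  have hcount : ∀ t, (toListI (mi v)).count t = mi v t := fun t => count_toListI (mi v) t
  by_cases hvu : v = u
  · subst hvu
    rw [if_pos rfl]
    have h1 : Pmon (fun t => mi v t - (toListI (mi v)).count t) w w = 1 := by
      have : (fun t => mi v t - (toListI (mi v)).count t) = fun _ => 0 := by
        funext t; rw [hcount t]; omega
      rw [this, Pmon]
      simp
    rw [h1, mul_one]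
    refine Finset.prod_congr rfl fun t _ => ?_
    rw [hcount t, Nat.descFactorial_self]
  · rw [if_neg hvu]
    by_cases hle : ∀ t, mi v t ≤ mi u t
    · -- some coordinate strictly smaller: the monomial vanishes at w
      have hex : ∃ t, mi v t < mi u t := by
        by_contra hno
        push_neg at hno
        exact hvu (mi_injective (funext fun t => le_antisymm (hle t) (hno t)))
      obtain ⟨t₀, ht₀⟩ := hex
      have : Pmon (fun t => mi u t - (toListI (mi v)).count t) w w = 0 := by
        unfold Pmon
        apply Finset.prod_eq_zero (Finset.mem_univ t₀)
        beta_reduce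
        rw [hcount t₀, sub_self, zero_pow]
        omega
      rw [this, mul_zero]
    · -- some coordinate larger: the falling factorial vanishes
      push_neg at hle
      obtain ⟨t₀, ht₀⟩ := hle
      have : (∏ t, ((mi u t).descFactorial ((toListI (mi v)).count t) : ℂ)) = 0 := by
        apply Finset.prod_eq_zero (Finset.mem_univ t₀)
        rw [hcount t₀]
        rw [Nat.descFactorial_eq_zero_iff_lt.2 ht₀]
        simp
      rw [this, zero_mul]
end Aux
namespace Aux
variable {n k : ℕ}

lemma toListI_length (v : Fin n → ℕ) : (toListI v).length = ∑ t, v t := by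
  rw [toListI, List.length_flatMap]
  rw [Fin.sum_univ_def]
  induction (List.finRange n) with
  | nil => rfl
  | cons a L ih => simp [ih]

lemma mpdList_congr {f₁ f₂ : (Fin n → ℂ) → ℂ} {O : Set (Fin n → ℂ)} (hO : IsOpen O)
    (h : Set.EqOn f₁ f₂ O) (l : List (Fin n)) : Set.EqOn (mpdList l f₁) (mpdList l f₂) O := by
  induction l with
  | nil => exact h
  | cons i l ih => exact pd_congr_eqOn hO ih i

lemma coord_smoothAt {F : (Fin n → ℂ) → Fin n → ℂ} {x : Fin n → ℂ}
    (hF : ContDiffAt ℂ ⊤ F x) (j : Fin n) : SmoothAt (fun w => F w j) x :=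
  (ContinuousLinearMap.proj j : (Fin n → ℂ) →L[ℂ] ℂ).contDiff.contDiffAt.comp x hF

end Aux

/-- For a change of variables `r` with generically invertible Jacobian and `k ≥ 1`, there
is a matrix `M(z)`, whose entries are polynomial expressions in the partial derivatives of
the `rᵢ`, such that for every smooth `y`, `∂^{≤k}(y ∘ r)(z) = M(z) · (∂^{≤k} y)(r(z))`,
and `M(z)` is invertible on the open set where the Jacobian is. -/
theorem stmt11 (n k : ℕ) (hk : 0 < k)
    (r : (Fin n → ℂ) → Fin n → ℂ) (hr : ContDiff ℂ ⊤ r)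
    (U : Set (Fin n → ℂ)) (hU : IsOpen U) (hUne : U.Nonempty)
    (hJ : ∀ z ∈ U,
      (Matrix.of fun i j : Fin n => fderiv ℂ (fun w => r w i) z (Pi.single j 1)).det ≠ 0) :
    ∃ M : (Fin n → ℂ) → Matrix (MIdx n k) (MIdx n k) ℂ,
      (∀ a b : MIdx n k, ∃ P : MvPolynomial (Fin n × MIdx n k) ℂ, ∀ z,
        M z a b = MvPolynomial.eval
          (fun iv : Fin n × MIdx n k =>
            mpd (fun t => (iv.2.1 t : ℕ)) (fun w => r w iv.1) z) P) ∧
      (∀ y : (Fin n → ℂ) → ℂ, ContDiff ℂ ⊤ y → ∀ z ∈ U,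
        (fun v : MIdx n k => mpd (fun t => (v.1 t : ℕ)) (fun w => y (r w)) z)
          = (M z).mulVec fun v : MIdx n k => mpd (fun t => (v.1 t : ℕ)) y (r z)) ∧
      (∀ z ∈ U, IsUnit (M z)) := by
  classical
  set M : (Fin n → ℂ) → Matrix (MIdx n k) (MIdx n k) ℂ :=
    fun z => Matrix.of fun a b => Aux.evalE r z (Aux.Crec (Aux.toListI (Aux.mi a)) b) with hM
  have hlen : ∀ a : MIdx n k, (Aux.toListI (Aux.mi a)).length ≤ k := by
    intro a
    rw [Aux.toListI_length]
    exact Aux.deg_le a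
  have hrcoord : ∀ z : Fin n → ℂ, ∀ j, Aux.SmoothAt (fun w => r w j) z :=
    fun z j => Aux.coord_smoothAt hr.contDiffAt j
  -- the universal chain rule identity for `r`
  have HM : ∀ y : (Fin n → ℂ) → ℂ, ContDiff ℂ ⊤ y → ∀ z, ∀ a : MIdx n k,
      mpd (Aux.mi a) (fun w => y (r w)) z
        = ∑ b : MIdx n k, M z a b * mpd (Aux.mi b) y (r z) := by
    intro y hy z a
    rw [Aux.mpd_eq_mpdList]
    exact Aux.main_chain isOpen_univ (fun z' _ j => hrcoord z' j) hy hk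
      (Aux.toListI (Aux.mi a)) (hlen a) z (Set.mem_univ z)
  refine ⟨M, ?_, ?_, ?_⟩
  · intro a b
    exact ⟨Aux.Crec (Aux.toListI (Aux.mi a)) b, fun z => rfl⟩
  · intro y hy z _
    funext a
    rw [Matrix.mulVec]
    show mpd (Aux.mi a) (fun w => y (r w)) z = _
    rw [HM y hy z a]
    rfl
  · -- invertibility via a local inverse
    intro z₀ hz₀
    -- the derivative of `r` at a point of `U` as a continuous linear equivalence
    have hdiffco : ∀ (a : Fin n → ℂ) (i : Fin n), DifferentiableAt ℂ (fun w => r w i) a :=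
      fun a i => (hrcoord a i).dAt
    have mkEquiv : ∀ a ∈ U, ∃ e : (Fin n → ℂ) ≃L[ℂ] (Fin n → ℂ),
        HasFDerivAt r (e : (Fin n → ℂ) →L[ℂ] (Fin n → ℂ)) a := by
      intro a ha
      set Amat := Matrix.of fun i j : Fin n => fderiv ℂ (fun w => r w i) a (Pi.single j 1)
        with hAmat
      have hdet : IsUnit Amat.det := isUnit_iff_ne_zero.2 (hJ a ha)
      have hInv : Invertible Amat := Amat.invertibleOfIsUnitDet hdet
      refine ⟨(Amat.toLinearEquiv' hInv).toContinuousLinearEquiv, ?_⟩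
      have h0 : DifferentiableAt ℂ r a := differentiableAt_pi.mpr fun i => hdiffco a i
      have hfd := h0.hasFDerivAt
      have hcoe : ((Amat.toLinearEquiv' hInv).toContinuousLinearEquiv :
          (Fin n → ℂ) →L[ℂ] (Fin n → ℂ)) = fderiv ℂ r a := by
        apply ContinuousLinearMap.ext
        intro x
        show Matrix.toLin' Amat x = fderiv ℂ r a x
        rw [fderiv_pi (fun i => hdiffco a i)]
        rw [Matrix.toLin'_apply]
        funext i
        rw [ContinuousLinearMap.pi_apply]
        have hx : x = ∑ j, x j • (Pi.single j 1 : Fin n → ℂ) := by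
          funext t
          simp [Finset.sum_apply, Pi.single_apply]
        conv_rhs => rw [hx]
        rw [map_sum]
        simp only [map_smul, smul_eq_mul]
        rw [Matrix.mulVec]
        show Finset.sum _ _ = _
        refine Finset.sum_congr rfl fun j _ => ?_
        rw [hAmat]
        simp [Matrix.of_apply, mul_comm]
      rw [hcoe]
      exact hfd
    obtain ⟨e₀, he₀⟩ := mkEquiv z₀ hz₀
    -- the partial homeomorphism given by the inverse function theorem
    set h := ContDiffAt.toOpenPartialHomeomorph r (hr.contDiffAt : ContDiffAt ℂ ⊤ r z₀) he₀ (by simp) with hh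
    have hcoe : (h : (Fin n → ℂ) → (Fin n → ℂ)) = r :=
      ContDiffAt.toOpenPartialHomeomorph_coe _ _ _
    have hz₀src : z₀ ∈ h.source := ContDiffAt.mem_toOpenPartialHomeomorph_source _ _ _
    have hrz₀tgt : r z₀ ∈ h.target := by
      have := h.map_source hz₀src
      rwa [hcoe] at this
    have hsymm_rz₀ : h.symm (r z₀) = z₀ := by
      have := h.left_inv hz₀src
      rwa [hcoe] at this
    -- the open set on which the local inverse is smooth
    set W : Set (Fin n → ℂ) := h.target ∩ h.symm ⁻¹' U with hW
    have hWopen : IsOpen W := h.isOpen_inter_preimage_symm hU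
    have hrz₀W : r z₀ ∈ W := ⟨hrz₀tgt, by rw [Set.mem_preimage, hsymm_rz₀]; exact hz₀⟩
    have hsmW : ∀ w ∈ W, ∀ j, Aux.SmoothAt (fun w' => h.symm w' j) w := by
      intro w hw j
      obtain ⟨hw1, hw2⟩ := hw
      obtain ⟨e, he⟩ := mkEquiv (h.symm w) hw2
      have hsAt : ContDiffAt ℂ ⊤ h.symm w := by
        apply h.contDiffAt_symm hw1
        · rw [hcoe]; exact he
        · rw [hcoe]; exact hr.contDiffAt
      exact Aux.coord_smoothAt hsAt j
    -- the matrix of the local inverse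
    set Ms : Matrix (MIdx n k) (MIdx n k) ℂ :=
      Matrix.of fun a b =>
        Aux.evalE (fun w => h.symm w) (r z₀) (Aux.Crec (Aux.toListI (Aux.mi a)) b) with hMs
    -- the key left-inverse identity
    have hkey : Ms * M z₀ = 1 := by
      apply Matrix.ext
      intro a u
      -- test against the monomial centered at r z₀
      set y : (Fin n → ℂ) → ℂ := Aux.Pmon (Aux.mi u) (r z₀) with hy
      have hysm : ContDiff ℂ ⊤ y := Aux.contDiff_Pmon _ _
      have hYsm : ContDiff ℂ ⊤ (fun w => y (r w)) := hysm.comp hr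
      -- chain rule for the inverse applied to `y ∘ r`
      have h1 : mpd (Aux.mi a) (fun w' => y (r (h.symm w'))) (r z₀)
          = ∑ b : MIdx n k, Ms a b * mpd (Aux.mi b) (fun w => y (r w)) (h.symm (r z₀)) := by
        rw [Aux.mpd_eq_mpdList]
        exact Aux.main_chain hWopen hsmW hYsm hk (Aux.toListI (Aux.mi a)) (hlen a)
          (r z₀) hrz₀W
      rw [hsymm_rz₀] at h1
      -- the left side is the jet of `y` itself
      have h2 : mpd (Aux.mi a) (fun w' => y (r (h.symm w'))) (r z₀)
          = mpd (Aux.mi a) y (r z₀) := by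
        rw [Aux.mpd_eq_mpdList, Aux.mpd_eq_mpdList]
        apply Aux.mpdList_congr h.open_target (fun w' hw' => ?_) _ hrz₀tgt
        show y (r (h.symm w')) = y w'
        have := h.right_inv hw'
        rw [hcoe] at this
        rw [this]
      -- expand the inner jets via the chain rule for `r` and the delta property
      have h3 : ∀ b : MIdx n k, mpd (Aux.mi b) (fun w => y (r w)) z₀
          = M z₀ b u * (∏ t, ((Aux.mi u t).factorial : ℂ)) := by
        intro b
        rw [HM y hysm z₀ b]
        rw [Finset.sum_eq_single u]
        · rw [hy, Aux.mpd_Pmon_delta hk, if_pos rfl]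
        · intro c _ hcu
          rw [hy, Aux.mpd_Pmon_delta hk, if_neg hcu, mul_zero]
        · intro hcon; exact absurd (Finset.mem_univ u) hcon
      have h4 : mpd (Aux.mi a) y (r z₀)
          = (if a = u then (1:ℂ) else 0) * (∏ t, ((Aux.mi u t).factorial : ℂ)) := by
        rw [hy, Aux.mpd_Pmon_delta hk]
        split
        · rw [one_mul]
        · rw [zero_mul]
      have hfac : (∏ t, ((Aux.mi u t).factorial : ℂ)) ≠ 0 := by
        apply Finset.prod_ne_zero_iff.2
        intro t _
        exact_mod_cast Nat.cast_ne_zero.2 (Nat.factorial_ne_zero _)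
      have h5 : (∑ b : MIdx n k, Ms a b * M z₀ b u) * (∏ t, ((Aux.mi u t).factorial : ℂ))
          = (if a = u then (1:ℂ) else 0) * (∏ t, ((Aux.mi u t).factorial : ℂ)) := by
        rw [← h4, ← h2, h1]
        rw [Finset.sum_mul]
        refine Finset.sum_congr rfl fun b _ => ?_
        rw [h3 b]
        ring
      have h6 := mul_right_cancel₀ hfac h5
      rw [Matrix.mul_apply]
      rw [h6]
      rw [Matrix.one_apply]
    exact (Matrix.isUnit_iff_isUnit_det _).2 (Matrix.isUnit_det_of_left_inverse hkey)
end

section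
/- The function Y(z) = −(z⁶ + 3Cz³ − 3z⁴ + 3z² − 1)²/(576 z⁶), for any constant C ∈ ℂ, satisfies the algebraic ODE (z¹² − 2z¹⁰ − z⁸ + 4z⁶ − z⁴ − 2z² + 1)·Y(z) + 16 z⁸ · (Y'(z))² = 0 for all z ≠ 0. -/
/-- `Y(z) = −(z⁶ + 3Cz³ − 3z⁴ + 3z² − 1)²/(576 z⁶)` satisfies the algebraic ODE
`(z¹² − 2z¹⁰ − z⁸ + 4z⁶ − z⁴ − 2z² + 1)·Y + 16z⁸·(Y')² = 0` for all `z ≠ 0`. -/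
theorem stmt15 (C : ℂ)
    (Y : ℂ → ℂ)
    (hY : Y = fun z => -(z ^ 6 + 3 * C * z ^ 3 - 3 * z ^ 4 + 3 * z ^ 2 - 1) ^ 2 / (576 * z ^ 6)) :
    ∀ z : ℂ, z ≠ 0 →
      (z ^ 12 - 2 * z ^ 10 - z ^ 8 + 4 * z ^ 6 - z ^ 4 - 2 * z ^ 2 + 1) * Y z
        + 16 * z ^ 8 * (deriv Y z) ^ 2 = 0 := by
  intro z hz
  have hg : (576 : ℂ) * z ^ 6 ≠ 0 := by
    simp [hz]
  have hnum : HasDerivAt (fun z : ℂ => -(z ^ 6 + 3 * C * z ^ 3 - 3 * z ^ 4 + 3 * z ^ 2 - 1) ^ 2)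
      (-(2 * (z ^ 6 + 3 * C * z ^ 3 - 3 * z ^ 4 + 3 * z ^ 2 - 1) *
        (6 * z ^ 5 + 9 * C * z ^ 2 - 12 * z ^ 3 + 6 * z))) z := by
    have h1 : HasDerivAt (fun z : ℂ => z ^ 6 + 3 * C * z ^ 3 - 3 * z ^ 4 + 3 * z ^ 2 - 1)
        (6 * z ^ 5 + 9 * C * z ^ 2 - 12 * z ^ 3 + 6 * z) z := by
      have := (((((hasDerivAt_pow 6 z).add
        (((hasDerivAt_pow 3 z).const_mul (3 * C)))).sub
        ((hasDerivAt_pow 4 z).const_mul 3)).add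
        ((hasDerivAt_pow 2 z).const_mul 3)).sub_const 1)
      exact this.congr_deriv (by ring)
    have := (h1.pow 2).neg
    exact this.congr_deriv (by norm_num)
  have hden : HasDerivAt (fun z : ℂ => 576 * z ^ 6) (576 * (6 * z ^ 5)) z := by
    simpa using (hasDerivAt_pow 6 z).const_mul (576 : ℂ)
  have hdiv := hnum.div hden hg
  rw [hY]
  erw [hdiv.deriv]
  field_simp
  ring
end

section
/- Let F : ℝ → ℝ be differentiable, define w₁(z) = z₂² − z₁ − z₂ and w₂(z) = (5/6)z₂³ − (5/4)z₂² + (3/4)z₂ − 1/6 + (1/2)z₁z₂² − (1/2)z₁² − z₁z₂ + (3/4)z₁ + z₃, and set Y(z₁,z₂,z₃) = 2/(1 − 2z₂ + F(w₁(z), w₂(z))). Then on the open set where the denominator is nonzero, Y satisfies the PDE (2z₂ − 1)·∂Y/∂z₁ + z₂(z₁ − z₂²)·∂Y/∂z₃ − Y² + ∂Y/∂z₂ = 0. -/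
set_option maxHeartbeats 2000000 in
/-- Let `F` be `C¹`, `w₁(z) = z₂² − z₁ − z₂`,
`w₂(z) = (5/6)z₂³ − (5/4)z₂² + (3/4)z₂ − 1/6 + (1/2)z₁z₂² − (1/2)z₁² − z₁z₂ + (3/4)z₁ + z₃`,
and `Y = 2/(1 − 2z₂ + F(w₁,w₂))`. Then where the denominator is nonzero, `Y` satisfies
`(2z₂−1)·Y_{z₁} + z₂(z₁−z₂²)·Y_{z₃} − Y² + Y_{z₂} = 0`. -/
theorem stmt18 (F : ℝ × ℝ → ℝ) (hF : ContDiff ℝ 1 F)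
    (w₁ w₂ : ℝ → ℝ → ℝ → ℝ)
    (hw₁ : w₁ = fun z₁ z₂ _z₃ => z₂ ^ 2 - z₁ - z₂)
    (hw₂ : w₂ = fun z₁ z₂ z₃ => (5 / 6) * z₂ ^ 3 - (5 / 4) * z₂ ^ 2 + (3 / 4) * z₂ - 1 / 6
        + (1 / 2) * z₁ * z₂ ^ 2 - (1 / 2) * z₁ ^ 2 - z₁ * z₂ + (3 / 4) * z₁ + z₃)
    (Y : ℝ → ℝ → ℝ → ℝ)
    (hYdef : Y = fun z₁ z₂ z₃ => 2 / (1 - 2 * z₂ + F (w₁ z₁ z₂ z₃, w₂ z₁ z₂ z₃))) :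
    ∀ z₁ z₂ z₃ : ℝ, 1 - 2 * z₂ + F (w₁ z₁ z₂ z₃, w₂ z₁ z₂ z₃) ≠ 0 →
      (2 * z₂ - 1) * deriv (fun t => Y t z₂ z₃) z₁
        + z₂ * (z₁ - z₂ ^ 2) * deriv (fun t => Y z₁ z₂ t) z₃
        - (Y z₁ z₂ z₃) ^ 2 + deriv (fun t => Y z₁ t z₃) z₂ = 0 := by
  subst hw₁ hw₂ hYdef
  intro z₁ z₂ z₃ hD
  simp only [] at hD ⊢
  have hFd : HasFDerivAt F
      (fderiv ℝ F (z₂ ^ 2 - z₁ - z₂,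
        (5 / 6) * z₂ ^ 3 - (5 / 4) * z₂ ^ 2 + (3 / 4) * z₂ - 1 / 6
          + (1 / 2) * z₁ * z₂ ^ 2 - (1 / 2) * z₁ ^ 2 - z₁ * z₂ + (3 / 4) * z₁ + z₃))
      (z₂ ^ 2 - z₁ - z₂,
        (5 / 6) * z₂ ^ 3 - (5 / 4) * z₂ ^ 2 + (3 / 4) * z₂ - 1 / 6
          + (1 / 2) * z₁ * z₂ ^ 2 - (1 / 2) * z₁ ^ 2 - z₁ * z₂ + (3 / 4) * z₁ + z₃) :=
    ((hF.differentiable one_ne_zero) _).hasFDerivAt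
  set L := fderiv ℝ F (z₂ ^ 2 - z₁ - z₂,
        (5 / 6) * z₂ ^ 3 - (5 / 4) * z₂ ^ 2 + (3 / 4) * z₂ - 1 / 6
          + (1 / 2) * z₁ * z₂ ^ 2 - (1 / 2) * z₁ ^ 2 - z₁ * z₂ + (3 / 4) * z₁ + z₃) with hL
  set a := L (1, 0) with ha
  set b := L (0, 1) with hb
  have hLin : ∀ u v : ℝ, L (u, v) = u * a + v * b := by
    intro u v
    have h : (u, v) = u • ((1 : ℝ), (0 : ℝ)) + v • ((0 : ℝ), (1 : ℝ)) := by
      simp [Prod.ext_iff]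
    rw [h, map_add, map_smul, map_smul, smul_eq_mul, smul_eq_mul, ← ha, ← hb]
  -- z₁ direction
  have h11 : HasDerivAt (fun t : ℝ => z₂ ^ 2 - t - z₂) (0 - 1) z₁ :=
    ((hasDerivAt_const z₁ (z₂ ^ 2)).sub (hasDerivAt_id' z₁)).sub_const z₂
  have h12 : HasDerivAt (fun t : ℝ => (5 / 6) * z₂ ^ 3 - (5 / 4) * z₂ ^ 2 + (3 / 4) * z₂ - 1 / 6
      + (1 / 2) * t * z₂ ^ 2 - (1 / 2) * t ^ 2 - t * z₂ + (3 / 4) * t + z₃)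
      (0 + 1 / 2 * 1 * z₂ ^ 2 - 1 / 2 * (↑2 * z₁ ^ 1) - 1 * z₂ + 3 / 4 * 1) z₁ := by
    exact (((((hasDerivAt_const z₁
        ((5 / 6) * z₂ ^ 3 - (5 / 4) * z₂ ^ 2 + (3 / 4) * z₂ - 1 / 6)).add
        (((hasDerivAt_id' z₁).const_mul (1 / 2)).mul_const (z₂ ^ 2))).sub
        ((hasDerivAt_pow 2 z₁).const_mul (1 / 2))).sub
        ((hasDerivAt_id' z₁).mul_const z₂)).add
        ((hasDerivAt_id' z₁).const_mul (3 / 4))).add_const z₃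
  have hDen1 := ((hFd.comp_hasDerivAt z₁ (h11.prodMk h12)).const_add (1 - 2 * z₂))
  have hY1 := (hasDerivAt_const z₁ (2 : ℝ)).div hDen1 hD
  -- z₃ direction
  have h31 : HasDerivAt (fun _ : ℝ => z₂ ^ 2 - z₁ - z₂) 0 z₃ := hasDerivAt_const _ _
  have h32 : HasDerivAt (fun t : ℝ => (5 / 6) * z₂ ^ 3 - (5 / 4) * z₂ ^ 2 + (3 / 4) * z₂ - 1 / 6
      + (1 / 2) * z₁ * z₂ ^ 2 - (1 / 2) * z₁ ^ 2 - z₁ * z₂ + (3 / 4) * z₁ + t) (1 : ℝ) z₃ := by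
    simpa using (hasDerivAt_id' z₃).const_add ((5 / 6) * z₂ ^ 3 - (5 / 4) * z₂ ^ 2 + (3 / 4) * z₂
      - 1 / 6 + (1 / 2) * z₁ * z₂ ^ 2 - (1 / 2) * z₁ ^ 2 - z₁ * z₂ + (3 / 4) * z₁)
  have hDen3 := ((hFd.comp_hasDerivAt z₃ (h31.prodMk h32)).const_add (1 - 2 * z₂))
  have hY3 := (hasDerivAt_const z₃ (2 : ℝ)).div hDen3 hD
  -- z₂ direction
  have h21 : HasDerivAt (fun t : ℝ => t ^ 2 - z₁ - t) (↑2 * z₂ ^ 1 - 0 - 1) z₂ :=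
    (((hasDerivAt_pow 2 z₂).sub (hasDerivAt_const z₂ z₁)).sub (hasDerivAt_id' z₂))
  have h22 : HasDerivAt (fun t : ℝ => (5 / 6) * t ^ 3 - (5 / 4) * t ^ 2 + (3 / 4) * t - 1 / 6
      + (1 / 2) * z₁ * t ^ 2 - (1 / 2) * z₁ ^ 2 - z₁ * t + (3 / 4) * z₁ + z₃)
      (5 / 6 * (↑3 * z₂ ^ 2) - 5 / 4 * (↑2 * z₂ ^ 1) + 3 / 4 * 1 - 0 + 1 / 2 * z₁ * (↑2 * z₂ ^ 1)
        - 0 - z₁ * 1 + 0) z₂ := by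
    exact (((((((((hasDerivAt_pow 3 z₂).const_mul (5 / 6)).sub
        ((hasDerivAt_pow 2 z₂).const_mul (5 / 4))).add
        ((hasDerivAt_id' z₂).const_mul (3 / 4))).sub (hasDerivAt_const z₂ (1 / 6))).add
        ((hasDerivAt_pow 2 z₂).const_mul (1 / 2 * z₁))).sub
        (hasDerivAt_const z₂ ((1 / 2) * z₁ ^ 2))).sub
        ((hasDerivAt_id' z₂).const_mul z₁)).add
        (hasDerivAt_const z₂ ((3 / 4) * z₁))).add_const z₃
  have hw1fun : (fun t : ℝ => z₂ ^ 2 - z₁ - z₂) = (fun t : ℝ => z₂ ^ 2 - z₁ - z₂) := rfl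
  have hDen2' := (hFd.comp_hasDerivAt z₂ (h21.prodMk h22))
  have hDen2 : HasDerivAt (fun t : ℝ => 1 - 2 * t
      + F (t ^ 2 - z₁ - t, (5 / 6) * t ^ 3 - (5 / 4) * t ^ 2 + (3 / 4) * t - 1 / 6
        + (1 / 2) * z₁ * t ^ 2 - (1 / 2) * z₁ ^ 2 - z₁ * t + (3 / 4) * z₁ + z₃))
      (0 - 2 * 1 + L (↑2 * z₂ ^ 1 - 0 - 1,
        5 / 6 * (↑3 * z₂ ^ 2) - 5 / 4 * (↑2 * z₂ ^ 1) + 3 / 4 * 1 - 0 + 1 / 2 * z₁ * (↑2 * z₂ ^ 1)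
          - 0 - z₁ * 1 + 0)) z₂ :=
    ((hasDerivAt_const z₂ (1 : ℝ)).sub ((hasDerivAt_id' z₂).const_mul 2)).add hDen2'
  have hY2 := (hasDerivAt_const z₂ (2 : ℝ)).div hDen2 hD
  simp only [Function.comp_def] at hY1 hY3
  simp only [Pi.div_def] at hY1 hY2 hY3
  rw [hY1.deriv, hY2.deriv, hY3.deriv]
  simp only [hLin]
  set c := F (z₂ ^ 2 - z₁ - z₂,
    (5 / 6) * z₂ ^ 3 - (5 / 4) * z₂ ^ 2 + (3 / 4) * z₂ - 1 / 6
      + (1 / 2) * z₁ * z₂ ^ 2 - (1 / 2) * z₁ ^ 2 - z₁ * z₂ + (3 / 4) * z₁ + z₃) with hc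
  field_simp [hD]
  ring
end

section
/- For a constant K > 0, the function Y(z₁,z₂) = √K·arctan(z₁) − √K·arctan(√(4z₂−K)/√K) + √(4z₂−K) satisfies the PDE (∂Y/∂z₁)²·(z₁²+1)² + 4z₂²·(∂Y/∂z₂)² − 4z₂ = 0 on the domain {(z₁,z₂) ∈ ℝ² : 4z₂ > K}. -/
/-- For `K > 0`, the function
`Y(z₁,z₂) = √K·arctan(z₁) − √K·arctan(√(4z₂−K)/√K) + √(4z₂−K)` satisfies the PDE
`(∂Y/∂z₁)²·(z₁²+1)² + 4z₂²·(∂Y/∂z₂)² − 4z₂ = 0` on `{4z₂ > K}`. -/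
theorem stmt19 (K : ℝ) (hK : 0 < K)
    (Y : ℝ → ℝ → ℝ)
    (hY : Y = fun z₁ z₂ => Real.sqrt K * Real.arctan z₁
        - Real.sqrt K * Real.arctan (Real.sqrt (4 * z₂ - K) / Real.sqrt K)
        + Real.sqrt (4 * z₂ - K)) :
    ∀ z₁ z₂ : ℝ, K < 4 * z₂ →
      (deriv (fun t => Y t z₂) z₁) ^ 2 * (z₁ ^ 2 + 1) ^ 2
        + 4 * z₂ ^ 2 * (deriv (fun t => Y z₁ t) z₂) ^ 2 - 4 * z₂ = 0 := by
  subst hY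
  intro z₁ z₂ hz
  have hu : 0 < 4 * z₂ - K := by linarith
  have hz2 : 0 < z₂ := by linarith
  have hsu : Real.sqrt (4 * z₂ - K) ^ 2 = 4 * z₂ - K := Real.sq_sqrt hu.le
  have hsK : Real.sqrt K ^ 2 = K := Real.sq_sqrt hK.le
  have hsu' : Real.sqrt (4 * z₂ - K) ≠ 0 := by positivity
  have hsK' : Real.sqrt K ≠ 0 := by positivity
  -- derivative in z₁
  have d1 : HasDerivAt (fun t => Real.sqrt K * Real.arctan t
      - Real.sqrt K * Real.arctan (Real.sqrt (4 * z₂ - K) / Real.sqrt K)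
      + Real.sqrt (4 * z₂ - K)) (Real.sqrt K * (1 / (1 + z₁ ^ 2))) z₁ := by
    exact (((Real.hasDerivAt_arctan z₁).const_mul (Real.sqrt K)).sub_const _).add_const _
  -- derivative in z₂
  have h1 : HasDerivAt (fun t : ℝ => 4 * t - K) 4 z₂ := by
    simpa using ((hasDerivAt_id z₂).const_mul 4).sub_const K
  have h2 : HasDerivAt (fun t : ℝ => Real.sqrt (4 * t - K))
      (4 / (2 * Real.sqrt (4 * z₂ - K))) z₂ := h1.sqrt (ne_of_gt hu)
  have h3 : HasDerivAt (fun t => Real.sqrt K * Real.arctan z₁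
      - Real.sqrt K * Real.arctan (Real.sqrt (4 * t - K) / Real.sqrt K)
      + Real.sqrt (4 * t - K)) _ z₂ := (((h2.div_const (Real.sqrt K)).arctan.const_mul (Real.sqrt K)).const_sub
      (Real.sqrt K * Real.arctan z₁)).add h2
  rw [d1.deriv, h3.deriv]
  have e2 : -(Real.sqrt K * (1 / (1 + (Real.sqrt (4 * z₂ - K) / Real.sqrt K) ^ 2) *
      (4 / (2 * Real.sqrt (4 * z₂ - K)) / Real.sqrt K))) + 4 / (2 * Real.sqrt (4 * z₂ - K))
      = Real.sqrt (4 * z₂ - K) / (2 * z₂) := by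
    have h4 : 1 + (Real.sqrt (4 * z₂ - K) / Real.sqrt K) ^ 2 = (4 * z₂) / K := by
      rw [div_pow, hsu, hsK]; field_simp; ring
    rw [h4]
    field_simp
    linear_combination (-1) * hsu
  rw [e2]
  have e1 : (Real.sqrt K * (1 / (1 + z₁ ^ 2))) ^ 2 * (z₁ ^ 2 + 1) ^ 2 = K := by
    have h5 : (1:ℝ) + z₁ ^ 2 ≠ 0 := by positivity
    rw [mul_pow, hsK, div_pow, one_pow, show (z₁ ^ 2 + 1) ^ 2 = (1 + z₁ ^ 2) ^ 2 by ring]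
    field_simp
  rw [e1, div_pow, hsu]
  field_simp
  ring
end
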